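/- For r ≥ 2, the optimal success probability for minimum-error discrimination satisfies P^opt ≤ (1/r)·(1 + ∑_{1≤i<j≤r} ‖qᵢρᵢ − q_jρ_j‖₁). -/

import Mathlib

open scoped ComplexOrder

/-- The operator absolute value `√(AᴴA)` of a matrix. -/
noncomputable def matAbs {n : ℕ} (A : Matrix (Fin n) (Fin n) ℂ) : Matrix (Fin n) (Fin n) ℂ :=
  (Matrix.posSemidef_conjTranspose_mul_self A).1.eigenvectorUnitary.1 *
    Matrix.diagonal ((↑) ∘ Real.sqrt ∘ (Matrix.posSemidef_conjTranspose_mul_self A).1.eigenvalues) *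
    (star (Matrix.posSemidef_conjTranspose_mul_self A).1.eigenvectorUnitary : Matrix (Fin n) (Fin n) ℂ)


/-- The trace norm `‖A‖₁ = tr √(AᴴA)`. -/
noncomputable def traceNorm {n : ℕ} (A : Matrix (Fin n) (Fin n) ℂ) : ℝ :=
  ((matAbs A).trace).re

/-- The positive part `A⁺ = (|A| + A)/2` of a self-adjoint matrix `A`, so that
`A = A⁺ - A⁻` with `A⁺, A⁻ ≥ 0`. -/
noncomputable def matPosPart {n : ℕ} (A : Matrix (Fin n) (Fin n) ℂ) : Matrix (Fin n) (Fin n) ℂ :=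
  (2 : ℂ)⁻¹ • (matAbs A + A)

/-- A density operator: positive semidefinite with unit trace. -/
def IsDensity {n : ℕ} (ρ : Matrix (Fin n) (Fin n) ℂ) : Prop :=
  ρ.PosSemidef ∧ ρ.trace = 1

/-- A POVM with `r` outcomes: positive semidefinite effects summing to the identity. -/
def IsPOVM {n r : ℕ} (M : Fin r → Matrix (Fin n) (Fin n) ℂ) : Prop :=
  (∀ i, (M i).PosSemidef) ∧ ∑ i, M i = 1

/-- Success probability `∑ i, q i * tr (ρ i * M i)` of a measurement. -/
noncomputable def successProb {n r : ℕ} (q : Fin r → ℝ)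
    (ρ M : Fin r → Matrix (Fin n) (Fin n) ℂ) : ℝ :=
  ∑ i, q i * ((ρ i * M i).trace).re

/-- Optimal success probability under minimum-error discrimination. -/
noncomputable def optSuccess {n r : ℕ} (q : Fin r → ℝ)
    (ρ : Fin r → Matrix (Fin n) (Fin n) ℂ) : ℝ :=
  sSup {p | ∃ M, IsPOVM M ∧ p = successProb q ρ M}

section Aux
open Matrix

lemma matAbs_eq_cfc {n : ℕ} (A : Matrix (Fin n) (Fin n) ℂ) :
    matAbs A = cfc Real.sqrt (Aᴴ * A) := by
  rw [(Matrix.posSemidef_conjTranspose_mul_self A).1.cfc_eq, IsHermitian.cfc,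
    Unitary.conjStarAlgAut_apply]
  rfl

lemma psd_cfc_sqrt {n : ℕ} {A : Matrix (Fin n) (Fin n) ℂ} (hA : A.PosSemidef) :
    cfc Real.sqrt A * cfc Real.sqrt A = A ∧ (cfc Real.sqrt A)ᴴ = cfc Real.sqrt A := by
  refine ⟨?_, ?_⟩
  · rw [← cfc_mul Real.sqrt Real.sqrt A]
    conv_rhs => rw [← cfc_id' ℝ A hA.1.isSelfAdjoint]
    refine cfc_congr fun x hx => ?_
    rw [hA.1.spectrum_real_eq_range_eigenvalues] at hx
    obtain ⟨i, rfl⟩ := hx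
    exact Real.mul_self_sqrt (hA.eigenvalues_nonneg i)
  · exact (cfc_predicate Real.sqrt A : IsSelfAdjoint _)

lemma matAbs_neg {n : ℕ} (A : Matrix (Fin n) (Fin n) ℂ) : matAbs (-A) = matAbs A := by
  rw [matAbs_eq_cfc, matAbs_eq_cfc]; simp

lemma matAbs_spectral {n : ℕ} {A : Matrix (Fin n) (Fin n) ℂ} (hA : A.IsHermitian) :
    matAbs A = (hA.eigenvectorUnitary : Matrix (Fin n) (Fin n) ℂ) *
      Matrix.diagonal (fun i => ((|hA.eigenvalues i| : ℝ) : ℂ)) *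
      (star (hA.eigenvectorUnitary : Matrix (Fin n) (Fin n) ℂ)) := by
  set U : Matrix (Fin n) (Fin n) ℂ := (hA.eigenvectorUnitary : Matrix (Fin n) (Fin n) ℂ) with hU
  have hUstar : star U * U = 1 := Unitary.coe_star_mul_self hA.eigenvectorUnitary
  set B : Matrix (Fin n) (Fin n) ℂ :=
    U * Matrix.diagonal (fun i => ((|hA.eigenvalues i| : ℝ) : ℂ)) * star U with hB
  have hkey : ∀ X Y : Matrix (Fin n) (Fin n) ℂ,
      (U * X * star U) * (U * Y * star U) = U * (X * Y) * star U := by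
    intro X Y
    have h1 : star U * (U * Y * star U) = Y * star U := by
      rw [← Matrix.mul_assoc, ← Matrix.mul_assoc, hUstar, Matrix.one_mul]
    rw [Matrix.mul_assoc (U * X), h1, ← Matrix.mul_assoc, Matrix.mul_assoc U X Y]
  have hBpsd : B.PosSemidef := by
    rw [hB, Matrix.star_eq_conjTranspose]
    exact (Matrix.PosSemidef.diagonal (fun i => by
      simpa using Complex.zero_le_real.2 (abs_nonneg _))).mul_mul_conjTranspose_same U
  have hsq : B ^ 2 = Aᴴ * A := by
    have hAe := hA.spectral_theorem
    rw [Unitary.conjStarAlgAut_apply] at hAe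
    rw [hA.eq, pow_two, hB]
    conv_rhs => rw [hAe]
    rw [hkey, hkey]
    congr 2
    rw [Matrix.diagonal_mul_diagonal, Matrix.diagonal_mul_diagonal]
    refine congrArg Matrix.diagonal (funext fun i => ?_)
    simp only [Function.comp_apply, RCLike.ofReal_alg, Complex.real_smul,
      Complex.ofReal_one, mul_one]
    rw [← Complex.ofReal_mul, ← Complex.ofReal_mul, abs_mul_abs_self]
  rw [matAbs_eq_cfc, ← hsq, ← cfc_comp_pow Real.sqrt 2 B (ha := hBpsd.1.isSelfAdjoint)]
  conv_rhs => rw [← cfc_id' ℝ B hBpsd.1.isSelfAdjoint]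
  refine cfc_congr fun x hx => ?_
  rw [hBpsd.1.spectrum_real_eq_range_eigenvalues] at hx
  obtain ⟨i, rfl⟩ := hx
  exact Real.sqrt_sq (hBpsd.eigenvalues_nonneg i)


lemma matPosPart_posSemidef {n : ℕ} {A : Matrix (Fin n) (Fin n) ℂ} (hA : A.IsHermitian) :
    (matPosPart A).PosSemidef := by
  set U : Matrix (Fin n) (Fin n) ℂ := (hA.eigenvectorUnitary : Matrix (Fin n) (Fin n) ℂ) with hU
  set Dabs : Matrix (Fin n) (Fin n) ℂ :=
    Matrix.diagonal (fun i => ((|hA.eigenvalues i| : ℝ) : ℂ)) with hDabs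
  set D : Matrix (Fin n) (Fin n) ℂ :=
    Matrix.diagonal (RCLike.ofReal ∘ hA.eigenvalues) with hD
  have hadd : matAbs A + A = U * (Dabs + D) * star U := by
    calc matAbs A + A = U * Dabs * star U + U * D * star U := by
          rw [matAbs_spectral hA]
          exact congrArg (U * Dabs * star U + ·) hA.spectral_theorem
      _ = U * (Dabs + D) * star U := by rw [Matrix.mul_add, Matrix.add_mul]
  have h1 : matPosPart A = U *
      Matrix.diagonal (fun i => ((2⁻¹ * (|hA.eigenvalues i| + hA.eigenvalues i) : ℝ) : ℂ)) *
      Uᴴ := by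
    rw [matPosPart, hadd, ← Matrix.smul_mul, ← Matrix.mul_smul, ← Matrix.star_eq_conjTranspose]
    congr 2
    rw [hDabs, hD, Matrix.diagonal_add, ← Matrix.diagonal_smul]
    refine congrArg Matrix.diagonal (funext fun i => ?_)
    simp only [Function.comp_apply, RCLike.ofReal_alg, Complex.real_smul,
      Complex.ofReal_one, mul_one, Pi.smul_apply, Pi.add_apply, smul_eq_mul]
    push_cast
    ring
  rw [h1]
  exact (Matrix.PosSemidef.diagonal (fun i => by
    have h0 : (0:ℝ) ≤ 2⁻¹ * (|hA.eigenvalues i| + hA.eigenvalues i) := by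
      linarith [neg_abs_le (hA.eigenvalues i)]
    simpa using Complex.zero_le_real.2 h0)).mul_mul_conjTranspose_same U

lemma matPosPart_sub_neg {n : ℕ} (A : Matrix (Fin n) (Fin n) ℂ) :
    matPosPart A - matPosPart (-A) = A := by
  rw [matPosPart, matPosPart, matAbs_neg]
  module

lemma matPosPart_add_neg {n : ℕ} (A : Matrix (Fin n) (Fin n) ℂ) :
    matPosPart A + matPosPart (-A) = matAbs A := by
  rw [matPosPart, matPosPart, matAbs_neg]
  module

lemma trace_re_nonneg_of_psd {n : ℕ} {A : Matrix (Fin n) (Fin n) ℂ} (hA : A.PosSemidef) :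
    0 ≤ (A.trace).re := by
  rw [Matrix.trace, Complex.re_sum]
  refine Finset.sum_nonneg fun i _ => ?_
  have h := hA.diag_nonneg (i := i)
  have h2 : (0:ℂ) ≤ A i i := by
    simpa [Matrix.mulVec, dotProduct, Pi.single_apply] using h
  exact (Complex.le_def.mp h2).1

lemma trace_mul_re_nonneg {n : ℕ} {A B : Matrix (Fin n) (Fin n) ℂ}
    (hA : A.PosSemidef) (hB : B.PosSemidef) : 0 ≤ ((A * B).trace).re := by
  set S := cfc Real.sqrt A with hS
  have h1 : A * B = S * (S * B) := by rw [← Matrix.mul_assoc, (psd_cfc_sqrt hA).1]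
  have h2 : ((A * B).trace) = ((S * B * S).trace) := by
    rw [h1, Matrix.trace_mul_cycle S B S, Matrix.mul_assoc]
  have h3 : (S * B * S).PosSemidef := by
    have := hB.mul_mul_conjTranspose_same S
    rwa [(psd_cfc_sqrt hA).2] at this
  rw [h2]; exact trace_re_nonneg_of_psd h3

lemma trace_mul_mono {n : ℕ} {P X Y : Matrix (Fin n) (Fin n) ℂ}
    (hP : P.PosSemidef) (h : (Y - X).PosSemidef) :
    ((P * X).trace).re ≤ ((P * Y).trace).re := by
  have := trace_mul_re_nonneg hP h
  rw [Matrix.mul_sub, Matrix.trace_sub, Complex.sub_re] at this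
  linarith


lemma matAbs_posSemidef {n : ℕ} (A : Matrix (Fin n) (Fin n) ℂ) : (matAbs A).PosSemidef := by
  unfold matAbs
  rw [Matrix.star_eq_conjTranspose]
  exact (Matrix.PosSemidef.diagonal (fun i => by
    simpa using Real.sqrt_nonneg _)).mul_mul_conjTranspose_same _

lemma traceNorm_nonneg {n : ℕ} (A : Matrix (Fin n) (Fin n) ℂ) : 0 ≤ traceNorm A :=
  trace_re_nonneg_of_psd (matAbs_posSemidef A)

lemma traceNorm_eq_pos_add_neg {n : ℕ} (A : Matrix (Fin n) (Fin n) ℂ) :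
    traceNorm A = ((matPosPart A).trace).re + ((matPosPart (-A)).trace).re := by
  rw [traceNorm, ← matPosPart_add_neg A, Matrix.trace_add, Complex.add_re]

lemma key_bound {n : ℕ} {A B C : Matrix (Fin n) (Fin n) ℂ} (hA : A.IsHermitian)
    (hB : B.PosSemidef) (hC : C.PosSemidef) (hBC : (1 - (B + C)).PosSemidef) :
    ((A * (B - C)).trace).re ≤ traceNorm A := by
  set P := matPosPart A with hP
  set N := matPosPart (-A) with hN
  have hPpsd : P.PosSemidef := matPosPart_posSemidef hA
  have hNpsd : N.PosSemidef := matPosPart_posSemidef hA.neg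
  have hAeq : A = P - N := (matPosPart_sub_neg A).symm
  have hexp : ((A * (B - C)).trace).re
      = ((P * B).trace).re - ((P * C).trace).re - ((N * B).trace).re + ((N * C).trace).re := by
    rw [hAeq, Matrix.sub_mul, Matrix.mul_sub, Matrix.mul_sub, Matrix.trace_sub,
      Matrix.trace_sub, Matrix.trace_sub, Complex.sub_re, Complex.sub_re, Complex.sub_re]
    ring
  have h1 : 0 ≤ ((P * C).trace).re := trace_mul_re_nonneg hPpsd hC
  have h2 : 0 ≤ ((N * B).trace).re := trace_mul_re_nonneg hNpsd hB
  have h3 : ((P * (B + C)).trace).re ≤ ((P * 1).trace).re :=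
    trace_mul_mono hPpsd hBC
  have h4 : ((N * (B + C)).trace).re ≤ ((N * 1).trace).re :=
    trace_mul_mono hNpsd hBC
  have h5 : ((P * (B + C)).trace).re = ((P * B).trace).re + ((P * C).trace).re := by
    rw [Matrix.mul_add, Matrix.trace_add, Complex.add_re]
  have h6 : ((N * (B + C)).trace).re = ((N * B).trace).re + ((N * C).trace).re := by
    rw [Matrix.mul_add, Matrix.trace_add, Complex.add_re]
  have h7 : ((P * 1).trace).re = (P.trace).re := by rw [Matrix.mul_one]
  have h8 : ((N * 1).trace).re = (N.trace).re := by rw [Matrix.mul_one]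
  have h9 := traceNorm_eq_pos_add_neg A
  rw [hexp, h9]
  rw [h7] at h3; rw [h8] at h4; rw [h5] at h3; rw [h6] at h4
  linarith

lemma posSemidef_sum {n : ℕ} {ι : Type*} [DecidableEq ι] (s : Finset ι)
    (f : ι → Matrix (Fin n) (Fin n) ℂ)
    (h : ∀ i ∈ s, (f i).PosSemidef) : (∑ i ∈ s, f i).PosSemidef := by
  induction s using Finset.induction_on with
  | empty => simpa using Matrix.PosSemidef.zero
  | insert _ _ hx ih =>
    rw [Finset.sum_insert hx]
    exact (h _ (Finset.mem_insert_self _ _)).add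
      (ih fun i hi => h i (Finset.mem_insert_of_mem hi))




lemma povm_bound {n r : ℕ} (hr : 2 ≤ r) (ρ : Fin r → Matrix (Fin n) (Fin n) ℂ)
    (q : Fin r → ℝ) (hρ : ∀ i, IsDensity (ρ i)) (hq : ∀ i, 0 < q i)
    (hq1 : ∑ i, q i = 1) (M : Fin r → Matrix (Fin n) (Fin n) ℂ) (hM : IsPOVM M) :
    successProb q ρ M ≤
      (1 / (r : ℝ)) * (1 +
        ∑ p ∈ Finset.univ.filter (fun p : Fin r × Fin r => p.1 < p.2),
            traceNorm ((q p.1 : ℂ) • ρ p.1 - (q p.2 : ℂ) • ρ p.2)) := by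
  classical
  set g : Fin r → Fin r → ℝ := fun i j => q i * ((ρ i * M j).trace).re with hg
  set S : ℝ := ∑ i, g i i with hS
  have hSP : successProb q ρ M = S := rfl
  -- row sums
  have hrow : ∀ i, ∑ j, g i j = q i := by
    intro i
    have h1 : ∑ j, ((ρ i * M j).trace).re = ((ρ i * ∑ j, M j).trace).re := by
      rw [Matrix.mul_sum, Matrix.trace_sum, Complex.re_sum]
    have h2 : ((ρ i * ∑ j, M j).trace).re = 1 := by
      rw [hM.2, Matrix.mul_one, (hρ i).2, Complex.one_re]
    calc ∑ j, g i j = q i * ∑ j, ((ρ i * M j).trace).re := by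
          rw [Finset.mul_sum]
      _ = q i := by rw [h1, h2, mul_one]
  set F : Fin r × Fin r → ℝ :=
    fun p => g p.1 p.1 - g p.1 p.2 - g p.2 p.1 + g p.2 p.2 with hF
  -- pairwise bound
  have hpair : ∀ p : Fin r × Fin r, p.1 ≠ p.2 →
      F p ≤ traceNorm ((q p.1 : ℂ) • ρ p.1 - (q p.2 : ℂ) • ρ p.2) := by
    rintro ⟨i, j⟩ hij
    simp only at hij
    set Δ : Matrix (Fin n) (Fin n) ℂ := (q i : ℂ) • ρ i - (q j : ℂ) • ρ j with hΔ
    have hΔherm : Δ.IsHermitian := by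
      have h1 : ((q i : ℂ) • ρ i).IsHermitian := by
        rw [Matrix.IsHermitian, Matrix.conjTranspose_smul, (hρ i).1.1.eq,
          Complex.star_def, Complex.conj_ofReal]
      have h2 : ((q j : ℂ) • ρ j).IsHermitian := by
        rw [Matrix.IsHermitian, Matrix.conjTranspose_smul, (hρ j).1.1.eq,
          Complex.star_def, Complex.conj_ofReal]
      exact h1.sub h2
    have hBC : (1 - (M i + M j)).PosSemidef := by
      have h1 : ∑ k, M k = M i + ∑ k ∈ Finset.univ.erase i, M k :=
        (Finset.add_sum_erase _ _ (Finset.mem_univ i)).symm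
      have hjmem : j ∈ Finset.univ.erase i := by
        simp [Finset.mem_erase, Ne.symm hij]
      have h2 : ∑ k ∈ Finset.univ.erase i, M k
          = M j + ∑ k ∈ (Finset.univ.erase i).erase j, M k :=
        (Finset.add_sum_erase _ _ hjmem).symm
      have h3 : 1 - (M i + M j) = ∑ k ∈ (Finset.univ.erase i).erase j, M k := by
        rw [← hM.2, h1, h2]; abel
      rw [h3]
      exact posSemidef_sum _ _ fun k _ => hM.1 k
    have hΔtr : ∀ X : Matrix (Fin n) (Fin n) ℂ,
        ((Δ * X).trace).re = q i * ((ρ i * X).trace).re - q j * ((ρ j * X).trace).re := by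
      intro X
      rw [hΔ, Matrix.sub_mul, Matrix.smul_mul, Matrix.smul_mul, Matrix.trace_sub,
        Matrix.trace_smul, Matrix.trace_smul, Complex.sub_re, smul_eq_mul, smul_eq_mul,
        Complex.re_ofReal_mul, Complex.re_ofReal_mul]
    have hkey := key_bound hΔherm (hM.1 i) (hM.1 j) hBC
    have hexp : ((Δ * (M i - M j)).trace).re = F (i, j) := by
      rw [show Δ * (M i - M j) = Δ * M i - Δ * M j from Matrix.mul_sub _ _ _,
        Matrix.trace_sub, Complex.sub_re, hΔtr, hΔtr]
      simp only [hF, hg]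
      ring
    rw [← hexp]
    exact hkey
  -- total sum over all pairs
  have e3 : ∑ i, ∑ j, g i j = 1 := by
    rw [Finset.sum_congr rfl fun i _ => hrow i, hq1]
  have e4 : ∑ i : Fin r, ∑ j : Fin r, g j i = 1 := by
    rw [Finset.sum_comm]; exact e3
  have e1 : ∑ i : Fin r, ∑ _j : Fin r, g i i = (r : ℝ) * S := by
    simp only [Finset.sum_const, Finset.card_univ, Fintype.card_fin, nsmul_eq_mul]
    rw [← Finset.mul_sum]
  have e2 : ∑ i : Fin r, ∑ j : Fin r, g j j = (r : ℝ) * S := by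
    rw [Finset.sum_comm]; exact e1
  have htot : ∑ p : Fin r × Fin r, F p = 2 * ((r : ℝ) * S) - 2 := by
    rw [Fintype.sum_prod_type]
    have : ∀ i : Fin r, ∑ j, F (i, j)
        = (∑ _j : Fin r, g i i) - (∑ j, g i j) - (∑ j, g j i) + (∑ j, g j j) := by
      intro i
      rw [Finset.sum_add_distrib, Finset.sum_sub_distrib, Finset.sum_sub_distrib]
    rw [Finset.sum_congr rfl fun i _ => this i]
    rw [Finset.sum_add_distrib, Finset.sum_sub_distrib, Finset.sum_sub_distrib]
    rw [e1, e2, e3, e4]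
    ring
  -- symmetry / diagonal
  have hdiag0 : ∀ p : Fin r × Fin r, p.1 = p.2 → F p = 0 := by
    rintro ⟨i, j⟩ h
    simp only at h
    subst h
    simp only [hF]
    ring
  have hswap : ∑ p ∈ Finset.univ.filter (fun p : Fin r × Fin r => p.2 < p.1), F p
      = ∑ p ∈ Finset.univ.filter (fun p : Fin r × Fin r => p.1 < p.2), F p := by
    refine Finset.sum_nbij' Prod.swap Prod.swap ?_ ?_ ?_ ?_ ?_
    · intro p hp; simp only [Finset.mem_filter, Finset.mem_univ, true_and] at hp ⊢
      exact hp
    · intro p hp; simp only [Finset.mem_filter, Finset.mem_univ, true_and] at hp ⊢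
      exact hp
    · intro p _; simp
    · intro p _; simp
    · rintro ⟨i, j⟩ _; simp only [hF, Prod.swap]; ring
  have hsplit : ∑ p : Fin r × Fin r, F p
      = 2 * ∑ p ∈ Finset.univ.filter (fun p : Fin r × Fin r => p.1 < p.2), F p := by
    rw [← Finset.sum_filter_add_sum_filter_not Finset.univ
      (fun p : Fin r × Fin r => p.1 < p.2) F]
    have hnot : ∑ p ∈ Finset.univ.filter (fun p : Fin r × Fin r => ¬ p.1 < p.2), F p
        = ∑ p ∈ Finset.univ.filter (fun p : Fin r × Fin r => p.1 < p.2), F p := by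
      rw [← Finset.sum_filter_add_sum_filter_not
        (Finset.univ.filter (fun p : Fin r × Fin r => ¬ p.1 < p.2))
        (fun p => p.2 < p.1) F]
      have hz : ∑ p ∈ (Finset.univ.filter
          (fun p : Fin r × Fin r => ¬ p.1 < p.2)).filter (fun p => ¬ p.2 < p.1), F p = 0 := by
        refine Finset.sum_eq_zero fun p hp => ?_
        simp only [Finset.mem_filter, Finset.mem_univ, true_and] at hp
        exact hdiag0 p (le_antisymm (not_lt.1 hp.2) (not_lt.1 hp.1))
      have hset : (Finset.univ.filter
          (fun p : Fin r × Fin r => ¬ p.1 < p.2)).filter (fun p => p.2 < p.1)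
          = Finset.univ.filter (fun p : Fin r × Fin r => p.2 < p.1) := by
        ext p
        simp only [Finset.mem_filter, Finset.mem_univ, true_and]
        exact ⟨fun h => h.2, fun h => ⟨asymm h, h⟩⟩
      rw [hz, add_zero, hset, hswap]
    rw [hnot]; ring
  have hfilter : ∑ p ∈ Finset.univ.filter (fun p : Fin r × Fin r => p.1 < p.2), F p
      = (r : ℝ) * S - 1 := by
    have := htot
    rw [hsplit] at this
    linarith
  -- final comparison
  set T : ℝ := ∑ p ∈ Finset.univ.filter (fun p : Fin r × Fin r => p.1 < p.2),
      traceNorm ((q p.1 : ℂ) • ρ p.1 - (q p.2 : ℂ) • ρ p.2) with hT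
  have hle : (r : ℝ) * S - 1 ≤ T := by
    rw [← hfilter]
    refine Finset.sum_le_sum fun p hp => ?_
    simp only [Finset.mem_filter, Finset.mem_univ, true_and] at hp
    exact hpair p (ne_of_lt hp)
  have hrpos : (0 : ℝ) < r := by
    have : (2 : ℝ) ≤ r := by exact_mod_cast hr
    linarith
  rw [hSP]
  rw [div_mul_eq_mul_div, one_mul, le_div_iff₀ hrpos, mul_comm]
  linarith

end Aux

theorem stmt9 {n r : ℕ} (hr : 2 ≤ r) (ρ : Fin r → Matrix (Fin n) (Fin n) ℂ)
    (q : Fin r → ℝ) (hρ : ∀ i, IsDensity (ρ i)) (hq : ∀ i, 0 < q i)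
    (hq1 : ∑ i, q i = 1) :
    optSuccess q ρ ≤
      (1 / (r : ℝ)) * (1 +
        ∑ p ∈ Finset.univ.filter (fun p : Fin r × Fin r => p.1 < p.2),
            traceNorm ((q p.1 : ℂ) • ρ p.1 - (q p.2 : ℂ) • ρ p.2)) := by
  apply Real.sSup_le
  · rintro x ⟨M, hM, rfl⟩
    exact povm_bound hr ρ q hρ hq hq1 M hM
  · apply mul_nonneg
    · positivity
    · have h0 : (0:ℝ) ≤ ∑ p ∈ Finset.univ.filter (fun p : Fin r × Fin r => p.1 < p.2),
          traceNorm ((q p.1 : ℂ) • ρ p.1 - (q p.2 : ℂ) • ρ p.2) :=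
        Finset.sum_nonneg fun p _ => traceNorm_nonneg _
      linarith
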